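/- arXiv:1606.00542 — 2 statements merged into one kernel-verified Lean document; each statement's English description precedes it below -/
import Mathlib

section
/- Let $d, \mathfrak{d} \in \mathrm{Sym}_n$ with $\mathfrak{d} \in \mathscr{R}$, and define $\mathfrak{a}_{d,\mathfrak{d}} = \sum_{\sigma} \mathrm{sgn}(\sigma)\,\varepsilon_{\mathfrak{d}}(\sigma d)$, the sum over $\sigma \in C_{\t_0}$ with $\sigma d \in R_{\t_0}\,\mathfrak{d}\,\mathrm{Sym}_{\alpha|\beta}$. If $\mathfrak{d}' = \tau\,\mathfrak{d}\,\xi_\alpha\,\xi_\beta^{+|\alpha|}$ and $d' = \sigma\, d\, \eta_\alpha\,\eta_\beta^{+|\alpha|}$ with $\tau \in R_{\t_0}$, $\sigma \in C_{\t_0}$, and $(\xi_\alpha,\xi_\beta),(\eta_\alpha,\eta_\beta) \in \mathrm{Sym}_\alpha \times \mathrm{Sym}_\beta$, then $\mathfrak{d}' \in \mathscr{R}$ and $\mathfrak{a}_{d',\mathfrak{d}'} = \mathrm{sgn}(\sigma)\,\mathrm{sgn}(\xi_\beta)\,\mathrm{sgn}(\eta_\beta)\,\mathfrak{a}_{d,\mathfrak{d}}$.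 -/
namespace SignedYoung
open Equiv Finset
open scoped Classical

abbrev Sym (n : ℕ) := Equiv.Perm (Fin n)

/-- Index of the block of the composition `γ` containing position `i` (0-based). -/
def blockOf (γ : List ℕ) (i : ℕ) : ℕ :=
  (List.range γ.length).countP (fun j => decide ((γ.take (j + 1)).sum ≤ i))

/-- The Young subgroup of `Sym n` associated to the composition `γ`. -/
def youngSubgroup (n : ℕ) (γ : List ℕ) : Subgroup (Sym n) where
  carrier := {σ | ∀ i : Fin n, blockOf γ (σ i) = blockOf γ i}
  one_mem' := by intro i; simp
  mul_mem' := by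
    intro a b ha hb i
    simp only [Equiv.Perm.mul_apply]
    rw [ha, hb]
  inv_mem' := by
    intro a ha i
    have h := ha (a⁻¹ i)
    rw [← Equiv.Perm.mul_apply, mul_inv_cancel, Equiv.Perm.one_apply] at h
    exact h.symm

/-- The subgroup `Sym_α` of the Young subgroup `Sym_{α|β}`: block-preserving permutations
fixing all points `≥ |α|`. -/
def symA (n : ℕ) (α β : List ℕ) : Set (Sym n) :=
  {σ | σ ∈ youngSubgroup n (α ++ β) ∧ ∀ i : Fin n, α.sum ≤ (i : ℕ) → σ i = i}

/-- The subgroup `Sym_β^{+|α|}`: block-preserving permutations fixing all points `< |α|`. -/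
def symB (n : ℕ) (α β : List ℕ) : Set (Sym n) :=
  {σ | σ ∈ youngSubgroup n (α ++ β) ∧ ∀ i : Fin n, (i : ℕ) < α.sum → σ i = i}

/-- Cells of the Young diagram of the composition `lam`. -/
abbrev Cell (lam : List ℕ) := (i : Fin lam.length) × Fin (lam.get i)

/-- A `lam`-tableau: a bijective labelling of the cells by `1, …, n` (here `Fin n`). -/
abbrev Tab (n : ℕ) (lam : List ℕ) := Cell lam ≃ Fin n

/-- The row stabilizer of a tableau. -/
def rowStab {n : ℕ} {lam : List ℕ} (t : Tab n lam) : Set (Sym n) :=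
  {σ | ∀ a : Fin n, (t.symm (σ a)).1 = (t.symm a).1}

/-- The column stabilizer of a tableau. -/
def colStab {n : ℕ} {lam : List ℕ} (t : Tab n lam) : Set (Sym n) :=
  {σ | ∀ a : Fin n, ((t.symm (σ a)).2 : ℕ) = ((t.symm a).2 : ℕ)}

/-- Colours `c_1 < c_2 < ⋯ < d_1 < d_2 < ⋯` (0-based). -/
abbrev Colour := Lex (ℕ ⊕ ℕ)

def cCol (k : ℕ) : Colour := toLex (Sum.inl k)

def dCol (k : ℕ) : Colour := toLex (Sum.inr k)

/-- `T` is a `lam`-tableau of type `(α|β)`: exactly `α_k` cells of colour `c_k` and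
`β_k` of colour `d_k`. -/
def HasType {lam : List ℕ} (α β : List ℕ) (T : Cell lam → Colour) : Prop :=
  (∀ k : ℕ, (Finset.univ.filter fun c => T c = cCol k).card = α.getD k 0) ∧
  (∀ k : ℕ, (Finset.univ.filter fun c => T c = dCol k).card = β.getD k 0)

/-- The colour of the number `i` under the canonical colouring by `(α|β)`. -/
def colourOfIdx (α β : List ℕ) (i : ℕ) : Colour :=
  if blockOf (α ++ β) i < α.length then cCol (blockOf (α ++ β) i)
  else dCol (blockOf (α ++ β) i - α.length)

/-- The canonical `lam`-tableau of type `(α|β)` associated to the tableau `t0`. -/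
def canonT {n : ℕ} {lam : List ℕ} (t0 : Tab n lam) (α β : List ℕ) : Cell lam → Colour :=
  fun c => colourOfIdx α β (t0 c)

/-- The action `σ · T = T ∘ t0⁻¹ ∘ σ⁻¹ ∘ t0` of `Sym n` on tableaux of type `(α|β)`,
through the fixed tableau `t0`. -/
def actT {n : ℕ} {lam : List ℕ} (t0 : Tab n lam) (σ : Sym n) (T : Cell lam → Colour) :
    Cell lam → Colour :=
  fun c => T (t0.symm (σ⁻¹ (t0 c)))

/-- `T_d = d · T_0`. -/
def TOf {n : ℕ} {lam : List ℕ} (t0 : Tab n lam) (α β : List ℕ) (d : Sym n) :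
    Cell lam → Colour :=
  actT t0 d (canonT t0 α β)

def RowSemistd {lam : List ℕ} (T : Cell lam → Colour) : Prop :=
  ∀ c c' : Cell lam, c.1 = c'.1 → (c.2 : ℕ) < (c'.2 : ℕ) → T c ≤ T c'

def ColSemistd {lam : List ℕ} (T : Cell lam → Colour) : Prop :=
  ∀ c c' : Cell lam, (c.2 : ℕ) = (c'.2 : ℕ) → c.1 < c'.1 → T c ≤ T c'

/-- Repeats in a row occur only for colours `c_k`. -/
def RowRepeatC {lam : List ℕ} (T : Cell lam → Colour) : Prop :=
  ∀ c c' : Cell lam, c.1 = c'.1 → (c.2 : ℕ) ≠ (c'.2 : ℕ) → T c = T c' → ∃ k, T c = cCol k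

/-- Repeats in a column occur only for colours `d_k`. -/
def ColRepeatD {lam : List ℕ} (T : Cell lam → Colour) : Prop :=
  ∀ c c' : Cell lam, (c.2 : ℕ) = (c'.2 : ℕ) → c.1 ≠ c'.1 → T c = T c' → ∃ k, T c = dCol k

def IsSemistd {lam : List ℕ} (T : Cell lam → Colour) : Prop :=
  RowSemistd T ∧ ColSemistd T ∧ RowRepeatC T ∧ ColRepeatD T

/-- A standard tableau: strictly increasing along rows and down columns. -/
def IsStd {n : ℕ} {lam : List ℕ} (t : Tab n lam) : Prop :=
  (∀ c c' : Cell lam, c.1 = c'.1 → (c.2 : ℕ) < (c'.2 : ℕ) → t c < t c') ∧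
  (∀ c c' : Cell lam, (c.2 : ℕ) = (c'.2 : ℕ) → c.1 < c'.1 → t c < t c')

def IsPartition (n : ℕ) (lam : List ℕ) : Prop :=
  lam.Pairwise (· ≥ ·) ∧ (∀ x ∈ lam, 0 < x) ∧ lam.sum = n

def IsBicomp (n : ℕ) (α β : List ℕ) : Prop :=
  (∀ x ∈ α, 0 < x) ∧ (∀ x ∈ β, 0 < x) ∧ α.sum + β.sum = n

/-- `𝒮 = {d : d⁻¹ R_{t0} d ∩ Sym_{α|β} ⊆ Sym_α}`. -/
def RSet {n : ℕ} {lam : List ℕ} (t0 : Tab n lam) (α β : List ℕ) : Set (Sym n) :=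
  {d | ∀ σ ∈ rowStab t0, d⁻¹ * σ * d ∈ youngSubgroup n (α ++ β) →
    d⁻¹ * σ * d ∈ symA n α β}

/-- `𝒞 = {d : d⁻¹ C_{t0} d ∩ Sym_{α|β} ⊆ Sym_β^{+|α|}}`. -/
def CSet {n : ℕ} {lam : List ℕ} (t0 : Tab n lam) (α β : List ℕ) : Set (Sym n) :=
  {d | ∀ σ ∈ colStab t0, d⁻¹ * σ * d ∈ youngSubgroup n (α ++ β) →
    d⁻¹ * σ * d ∈ symB n α β}

/-- The double coset `R_{t0} x Sym_{α|β}`. -/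
def dCoset {n : ℕ} {lam : List ℕ} (t0 : Tab n lam) (α β : List ℕ) (x : Sym n) :
    Set (Sym n) :=
  {ω | ∃ τ ∈ rowStab t0, ∃ ξ ∈ youngSubgroup n (α ++ β), ω = τ * x * ξ}

/-- The double coset `C_{t0} x Sym_{α|β}`. -/
def cCoset {n : ℕ} {lam : List ℕ} (t0 : Tab n lam) (α β : List ℕ) (x : Sym n) :
    Set (Sym n) :=
  {ω | ∃ σ ∈ colStab t0, ∃ ξ ∈ youngSubgroup n (α ++ β), ω = σ * x * ξ}

/-- `ε` is the sign function `ε_𝔡` on the double coset `R_{t0} 𝔡 Sym_{α|β}`: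
`ε(τ 𝔡 ξ_α ξ_β^{+|α|}) = sgn ξ_β`. -/
def IsEps {n : ℕ} {lam : List ℕ} (t0 : Tab n lam) (α β : List ℕ) (𝔡 : Sym n)
    (ε : Sym n → ℤ) : Prop :=
  ∀ τ ∈ rowStab t0, ∀ ξa ∈ symA n α β, ∀ ξb ∈ symB n α β,
    ε (τ * 𝔡 * (ξa * ξb)) = (Equiv.Perm.sign ξb : ℤ)

/-- The coefficient `𝔞_{d,𝔡} = ∑_{σ ∈ C_{t0}, σd ∈ R_{t0} 𝔡 Sym_{α|β}} sgn(σ) ε_𝔡(σ d)`. -/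
noncomputable def coeffA {n : ℕ} {lam : List ℕ} (t0 : Tab n lam) (α β : List ℕ)
    (ε : Sym n → ℤ) (d 𝔡 : Sym n) : ℤ :=
  ∑ σ : Sym n, if σ ∈ colStab t0 ∧ σ * d ∈ dCoset t0 α β 𝔡
    then (Equiv.Perm.sign σ : ℤ) * ε (σ * d) else 0

/-- The multiset of colours in column `j` of `T`. -/
def colMul {lam : List ℕ} (T : Cell lam → Colour) (j : ℕ) : Multiset Colour :=
  (Finset.univ.filter fun c : Cell lam => (c.2 : ℕ) = j).val.map T

noncomputable def sortedCol (m : Multiset Colour) : List Colour := m.sort (· ≤ ·)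

/-- Comparison of column multisets: the sorted lists agree up to position `k`, where
the first is larger. -/
def msGT (m m' : Multiset Colour) : Prop :=
  ∃ k, (∀ s, s < k → (sortedCol m).getD s (cCol 0) = (sortedCol m').getD s (cCol 0)) ∧
    (sortedCol m').getD k (cCol 0) < (sortedCol m).getD k (cCol 0)

/-- The strict column-dominance order `T ⊳ T'`. -/
def TabGT {lam : List ℕ} (T T' : Cell lam → Colour) : Prop :=
  ∃ t, (∀ j, j < t → colMul T j = colMul T' j) ∧ msGT (colMul T t) (colMul T' t)

/-- The column-dominance pre-order `T ⊵ T'`. -/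
def TabGE {lam : List ℕ} (T T' : Cell lam → Colour) : Prop :=
  (∀ j, colMul T j = colMul T' j) ∨ TabGT T T'



section AuxLemmas

lemma mem_young_iff {n : ℕ} {γ : List ℕ} {g : Sym n} :
    g ∈ youngSubgroup n γ ↔ ∀ i : Fin n, blockOf γ (g i) = blockOf γ i := Iff.rfl

lemma blockOf_lt_iff (α β : List ℕ) (i : ℕ) :
    blockOf (α ++ β) i < α.length ↔ i < α.sum := by
  unfold blockOf
  rw [List.length_append, List.range_add, List.countP_append]
  have h2 : (List.countP (fun j => decide (((α ++ β).take (j + 1)).sum ≤ i))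
      (List.map (fun x => α.length + x) (List.range β.length))) = 0 ∨ α.sum ≤ i := by
    by_cases hi : α.sum ≤ i
    · exact Or.inr hi
    · refine Or.inl (List.countP_eq_zero.mpr ?_)
      intro a ha
      simp only [List.mem_map, List.mem_range] at ha
      obtain ⟨k, hk, rfl⟩ := ha
      simp only [decide_eq_true_eq]
      intro hle
      apply hi
      have : List.take (α.length + (k + 1)) (α ++ β) = α ++ List.take (k+1) β :=
        List.take_length_add_append _
      rw [show α.length + k + 1 = α.length + (k+1) by omega, this, List.sum_append] at hle
      omega
  constructor
  · intro h
    by_contra hi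
    push_neg at hi
    have hall : List.countP (fun j => decide (((α ++ β).take (j + 1)).sum ≤ i))
        (List.range α.length) = α.length := by
      refine (List.countP_eq_length.mpr ?_).trans List.length_range
      intro j hj
      simp only [List.mem_range] at hj
      simp only [decide_eq_true_eq]
      rw [List.take_append_of_le_length (by omega)]
      calc (α.take (j+1)).sum ≤ (α.take (j+1)).sum + (α.drop (j+1)).sum := by omega
        _ = α.sum := by rw [← List.sum_append, List.take_append_drop]
        _ ≤ i := hi
    omega
  · intro hi
    have hpos : 0 < α.length := by
      rcases α with _ | _
      · simp at hi
      · simp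
    have hzero : (List.countP (fun j => decide (((α ++ β).take (j + 1)).sum ≤ i))
        (List.map (fun x => α.length + x) (List.range β.length))) = 0 := by
      rcases h2 with h | h
      · exact h
      · omega
    rw [hzero, Nat.add_zero]
    have hne : List.countP (fun j => decide (((α ++ β).take (j + 1)).sum ≤ i))
        (List.range α.length) ≠ α.length := by
      intro heq
      have := List.countP_eq_length.mp (by rw [heq, List.length_range]) (α.length - 1)
        (by simp only [List.mem_range]; omega)
      simp only [decide_eq_true_eq] at this
      rw [show α.length - 1 + 1 = α.length by omega, List.take_left] at this
      omega
    have := List.countP_le_length (p := fun j => decide (((α ++ β).take (j + 1)).sum ≤ i))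
      (l := List.range α.length)
    simp only [List.length_range] at this
    omega

lemma young_small {n : ℕ} {α β : List ℕ} {g : Sym n} (hg : g ∈ youngSubgroup n (α ++ β))
    {i : Fin n} (hi : (i : ℕ) < α.sum) : ((g i : Fin n) : ℕ) < α.sum := by
  rw [← blockOf_lt_iff α β] at hi ⊢
  rw [mem_young_iff.mp hg i]
  exact hi

lemma young_big {n : ℕ} {α β : List ℕ} {g : Sym n} (hg : g ∈ youngSubgroup n (α ++ β))
    {i : Fin n} (hi : α.sum ≤ (i : ℕ)) : α.sum ≤ ((g i : Fin n) : ℕ) := by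
  by_contra h
  push_neg at h
  have := young_small (inv_mem hg) (i := g i) h
  rw [← Equiv.Perm.mul_apply g⁻¹ g, inv_mul_cancel, Equiv.Perm.one_apply] at this
  omega

lemma symA_inv {n : ℕ} {α β : List ℕ} {a : Sym n} (ha : a ∈ symA n α β) :
    a⁻¹ ∈ symA n α β := by
  refine ⟨inv_mem ha.1, fun i hi => ?_⟩
  have := ha.2 i hi
  conv_lhs => rw [← this]
  rw [← Equiv.Perm.mul_apply a⁻¹ a, inv_mul_cancel, Equiv.Perm.one_apply]

lemma symA_mul {n : ℕ} {α β : List ℕ} {a b : Sym n} (ha : a ∈ symA n α β)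
    (hb : b ∈ symA n α β) : a * b ∈ symA n α β := by
  refine ⟨mul_mem ha.1 hb.1, fun i hi => ?_⟩
  simp only [Equiv.Perm.mul_apply]
  rw [hb.2 i hi, ha.2 i hi]

lemma symB_inv {n : ℕ} {α β : List ℕ} {b : Sym n} (hb : b ∈ symB n α β) :
    b⁻¹ ∈ symB n α β := by
  refine ⟨inv_mem hb.1, fun i hi => ?_⟩
  have := hb.2 i hi
  conv_lhs => rw [← this]
  rw [← Equiv.Perm.mul_apply b⁻¹ b, inv_mul_cancel, Equiv.Perm.one_apply]

lemma symB_mul {n : ℕ} {α β : List ℕ} {a b : Sym n} (ha : a ∈ symB n α β)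
    (hb : b ∈ symB n α β) : a * b ∈ symB n α β := by
  refine ⟨mul_mem ha.1 hb.1, fun i hi => ?_⟩
  simp only [Equiv.Perm.mul_apply]
  rw [hb.2 i hi, ha.2 i hi]

lemma symA_fix_big {n : ℕ} {α β : List ℕ} {a : Sym n} (ha : a ∈ symA n α β)
    {i : Fin n} (hi : α.sum ≤ (i : ℕ)) : a i = i := ha.2 i hi

lemma symB_fix_small {n : ℕ} {α β : List ℕ} {b : Sym n} (hb : b ∈ symB n α β)
    {i : Fin n} (hi : (i : ℕ) < α.sum) : b i = i := hb.2 i hi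

lemma symA_comm_symB {n : ℕ} {α β : List ℕ} {a b : Sym n} (ha : a ∈ symA n α β)
    (hb : b ∈ symB n α β) : a * b = b * a := by
  ext i
  simp only [Equiv.Perm.mul_apply]
  by_cases h : (i : ℕ) < α.sum
  · rw [symB_fix_small hb h, symB_fix_small hb (young_small ha.1 h)]
  · push_neg at h
    rw [symA_fix_big ha h, symA_fix_big ha (young_big hb.1 h)]

lemma young_decomp {n : ℕ} {α β : List ℕ} {g : Sym n} (hg : g ∈ youngSubgroup n (α ++ β)) :
    ∃ a ∈ symA n α β, ∃ b ∈ symB n α β, g = a * b := by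
  have hiff : ∀ i : Fin n, ((i : ℕ) < α.sum) ↔ ((g i : ℕ) < α.sum) :=
    fun i => ⟨fun h => young_small hg h, fun h => by
      by_contra hcon; push_neg at hcon; exact absurd h (not_lt.mpr (young_big hg hcon))⟩
  set a : Sym n := Equiv.Perm.ofSubtype (g.subtypePerm (p := fun x : Fin n => (x:ℕ) < α.sum) (fun i => (hiff i).symm)) with hadef
  have haval : ∀ i : Fin n, (i : ℕ) < α.sum → a i = g i := by
    intro i hi
    rw [hadef, Equiv.Perm.ofSubtype_apply_of_mem (p := fun x : Fin n => (x:ℕ) < α.sum) _ hi, Equiv.Perm.subtypePerm_apply]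
  have haval' : ∀ i : Fin n, α.sum ≤ (i : ℕ) → a i = i := by
    intro i hi
    rw [hadef, Equiv.Perm.ofSubtype_apply_of_not_mem (p := fun x : Fin n => (x:ℕ) < α.sum) _ (by omega)]
  have haA : a ∈ symA n α β := by
    refine ⟨fun i => ?_, haval'⟩
    by_cases h : (i : ℕ) < α.sum
    · rw [haval i h]; exact mem_young_iff.mp hg i
    · rw [haval' i (by omega)]
  refine ⟨a, haA, a⁻¹ * g, ⟨mul_mem (inv_mem haA.1) hg, fun i hi => ?_⟩, by group⟩
  simp only [Equiv.Perm.mul_apply]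
  rw [← haval i hi, ← Equiv.Perm.mul_apply a⁻¹ a, inv_mul_cancel, Equiv.Perm.one_apply]



variable {n : ℕ} {lam : List ℕ}

lemma rowStab_mul {t : Tab n lam} {a b : Sym n} (ha : a ∈ rowStab t) (hb : b ∈ rowStab t) :
    a * b ∈ rowStab t := by
  intro i
  simp only [Equiv.Perm.mul_apply]
  rw [ha, hb]

lemma rowStab_inv {t : Tab n lam} {a : Sym n} (ha : a ∈ rowStab t) : a⁻¹ ∈ rowStab t := by
  intro i
  have h := ha (a⁻¹ i)
  rw [← Equiv.Perm.mul_apply a a⁻¹, mul_inv_cancel, Equiv.Perm.one_apply] at h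
  exact h.symm

lemma colStab_mul {t : Tab n lam} {a b : Sym n} (ha : a ∈ colStab t) (hb : b ∈ colStab t) :
    a * b ∈ colStab t := by
  intro i
  simp only [Equiv.Perm.mul_apply]
  rw [ha, hb]

lemma colStab_inv {t : Tab n lam} {a : Sym n} (ha : a ∈ colStab t) : a⁻¹ ∈ colStab t := by
  intro i
  have h := ha (a⁻¹ i)
  rw [← Equiv.Perm.mul_apply a a⁻¹, mul_inv_cancel, Equiv.Perm.one_apply] at h
  exact h.symm

lemma dCoset_congr {t0 : Tab n lam} {α β : List ℕ} {x τ ξ : Sym n}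
    (hτ : τ ∈ rowStab t0) (hξ : ξ ∈ youngSubgroup n (α ++ β)) :
    dCoset t0 α β (τ * x * ξ) = dCoset t0 α β x := by
  ext ω
  constructor
  · rintro ⟨τ₁, hτ₁, ζ, hζ, rfl⟩
    exact ⟨τ₁ * τ, rowStab_mul hτ₁ hτ, ξ * ζ, mul_mem hξ hζ, by group⟩
  · rintro ⟨τ₁, hτ₁, ζ, hζ, rfl⟩
    exact ⟨τ₁ * τ⁻¹, rowStab_mul hτ₁ (rowStab_inv hτ), ξ⁻¹ * ζ, mul_mem (inv_mem hξ) hζ,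
      by group⟩

lemma dCoset_mul_right {t0 : Tab n lam} {α β : List ℕ} {x ω η : Sym n}
    (hη : η ∈ youngSubgroup n (α ++ β)) :
    ω * η ∈ dCoset t0 α β x ↔ ω ∈ dCoset t0 α β x := by
  constructor
  · rintro ⟨τ₁, hτ₁, ζ, hζ, heq⟩
    refine ⟨τ₁, hτ₁, ζ * η⁻¹, mul_mem hζ (inv_mem hη), ?_⟩
    have : ω = τ₁ * x * ζ * η⁻¹ := by rw [← heq]; group
    rw [this]; group
  · rintro ⟨τ₁, hτ₁, ζ, hζ, rfl⟩
    exact ⟨τ₁, hτ₁, ζ * η, mul_mem hζ hη, by group⟩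


end AuxLemmas

/-- **Transformation of the coefficients `𝔞_{d,𝔡}` (Lemma 3.8(i)).** If
`𝔡' = τ 𝔡 ξ_α ξ_β^{+|α|}` and `d' = σ d η_α η_β^{+|α|}` with `τ ∈ R_{t0}`, `σ ∈ C_{t0}`,
then `𝔡' ∈ ℛ` and `𝔞_{d',𝔡'} = sgn(σ) sgn(ξ_β) sgn(η_β) 𝔞_{d,𝔡}`. -/
theorem coeffA_transform (n : ℕ) (lam : List ℕ) (hl : IsPartition n lam)
    (α β : List ℕ) (hab : IsBicomp n α β) (t0 : Tab n lam)
    (d 𝔡 d' 𝔡' : Sym n) (h𝔡 : 𝔡 ∈ RSet t0 α β)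
    (ε ε' : Sym n → ℤ) (hε : IsEps t0 α β 𝔡 ε) (hε' : IsEps t0 α β 𝔡' ε')
    (τ : Sym n) (hτ : τ ∈ rowStab t0) (σ : Sym n) (hσ : σ ∈ colStab t0)
    (ξa : Sym n) (hξa : ξa ∈ symA n α β) (ξb : Sym n) (hξb : ξb ∈ symB n α β)
    (ηa : Sym n) (hηa : ηa ∈ symA n α β) (ηb : Sym n) (hηb : ηb ∈ symB n α β)
    (hd' : d' = σ * d * (ηa * ηb)) (h𝔡'eq : 𝔡' = τ * 𝔡 * (ξa * ξb)) :
    𝔡' ∈ RSet t0 α β ∧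
    coeffA t0 α β ε' d' 𝔡' =
      (Equiv.Perm.sign σ : ℤ) * (Equiv.Perm.sign ξb : ℤ) * (Equiv.Perm.sign ηb : ℤ) *
        coeffA t0 α β ε d 𝔡 := by
  have hξy : ξa * ξb ∈ youngSubgroup n (α ++ β) := mul_mem hξa.1 hξb.1
  have hηy : ηa * ηb ∈ youngSubgroup n (α ++ β) := mul_mem hηa.1 hηb.1
  constructor
  · intro ρ hρ hyoung
    have hrew : 𝔡'⁻¹ * ρ * 𝔡'
        = ξb⁻¹ * (ξa⁻¹ * (𝔡⁻¹ * (τ⁻¹ * ρ * τ) * 𝔡) * ξa) * ξb := by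
      rw [h𝔡'eq]; group
    have hyoung2 : ξb⁻¹ * (ξa⁻¹ * (𝔡⁻¹ * (τ⁻¹ * ρ * τ) * 𝔡) * ξa) * ξb
        ∈ youngSubgroup n (α ++ β) := hrew ▸ hyoung
    have hgy : 𝔡⁻¹ * (τ⁻¹ * ρ * τ) * 𝔡 ∈ youngSubgroup n (α ++ β) := by
      have h2 : 𝔡⁻¹ * (τ⁻¹ * ρ * τ) * 𝔡
          = ξa * (ξb * (ξb⁻¹ * (ξa⁻¹ * (𝔡⁻¹ * (τ⁻¹ * ρ * τ) * 𝔡) * ξa) * ξb) * ξb⁻¹) * ξa⁻¹ := by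
        group
      rw [h2]
      exact mul_mem (mul_mem hξa.1 (mul_mem (mul_mem hξb.1 hyoung2) (inv_mem hξb.1)))
        (inv_mem hξa.1)
    have hgA : 𝔡⁻¹ * (τ⁻¹ * ρ * τ) * 𝔡 ∈ symA n α β :=
      h𝔡 (τ⁻¹ * ρ * τ) (rowStab_mul (rowStab_mul (rowStab_inv hτ) hρ) hτ) hgy
    have hA' : ξa⁻¹ * (𝔡⁻¹ * (τ⁻¹ * ρ * τ) * 𝔡) * ξa ∈ symA n α β :=
      symA_mul (symA_mul (symA_inv hξa) hgA) hξa
    have hc : (ξa⁻¹ * (𝔡⁻¹ * (τ⁻¹ * ρ * τ) * 𝔡) * ξa) * ξb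
        = ξb * (ξa⁻¹ * (𝔡⁻¹ * (τ⁻¹ * ρ * τ) * 𝔡) * ξa) := symA_comm_symB hA' hξb
    have hfinal : 𝔡'⁻¹ * ρ * 𝔡' = ξa⁻¹ * (𝔡⁻¹ * (τ⁻¹ * ρ * τ) * 𝔡) * ξa := by
      rw [hrew, mul_assoc, hc, ← mul_assoc, inv_mul_cancel, one_mul]
    rw [hfinal]
    exact hA'
  · have hcos : dCoset t0 α β 𝔡' = dCoset t0 α β 𝔡 := by
      rw [h𝔡'eq]; exact dCoset_congr hτ hξy
    have key : ∀ π : Sym n,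
        (Equiv.Perm.sign σ : ℤ) * (Equiv.Perm.sign ξb : ℤ) * (Equiv.Perm.sign ηb : ℤ) *
          (if π ∈ colStab t0 ∧ π * d ∈ dCoset t0 α β 𝔡
            then (Equiv.Perm.sign π : ℤ) * ε (π * d) else 0)
        = (if π * σ⁻¹ ∈ colStab t0 ∧ π * σ⁻¹ * d' ∈ dCoset t0 α β 𝔡'
            then (Equiv.Perm.sign (π * σ⁻¹) : ℤ) * ε' (π * σ⁻¹ * d') else 0) := by
      intro π
      have hd2 : π * σ⁻¹ * d' = π * d * (ηa * ηb) := by rw [hd']; group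
      have hcond : (π * σ⁻¹ ∈ colStab t0 ∧ π * σ⁻¹ * d' ∈ dCoset t0 α β 𝔡')
          ↔ (π ∈ colStab t0 ∧ π * d ∈ dCoset t0 α β 𝔡) := by
        rw [hd2, hcos, dCoset_mul_right hηy]
        constructor
        · rintro ⟨h1, h2⟩
          refine ⟨?_, h2⟩
          have h3 := colStab_mul h1 hσ
          simpa [mul_assoc] using h3
        · rintro ⟨h1, h2⟩
          exact ⟨colStab_mul h1 (colStab_inv hσ), h2⟩
      by_cases hcc : π ∈ colStab t0 ∧ π * d ∈ dCoset t0 α β 𝔡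
      · rw [if_pos hcc, if_pos (hcond.mpr hcc)]
        obtain ⟨τ₁, hτ₁, ζ, hζ, hζeq⟩ := hcc.2
        obtain ⟨ζa, hζa, ζb, hζb, rfl⟩ := young_decomp hζ
        have hX : (ξa * ξb) * ((ξa⁻¹ * ζa * ηa) * (ξb⁻¹ * ζb * ηb))
            = (ζa * ζb) * (ηa * ηb) := by
          ext i
          simp only [Equiv.Perm.mul_apply]
          by_cases h : (i : ℕ) < α.sum
          · rw [symB_fix_small hηb h, symB_fix_small hζb h, symB_fix_small (symB_inv hξb) h]
            have h1 : ((ηa i : Fin n) : ℕ) < α.sum := young_small hηa.1 h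
            have h2 : ((ζa (ηa i) : Fin n) : ℕ) < α.sum := young_small hζa.1 h1
            have h3 : ((ξa⁻¹ (ζa (ηa i)) : Fin n) : ℕ) < α.sum := young_small (inv_mem hξa.1) h2
            rw [symB_fix_small hξb h3, ← Equiv.Perm.mul_apply ξa ξa⁻¹, mul_inv_cancel, Equiv.Perm.one_apply, symB_fix_small hζb h1]
          · push_neg at h
            have h1 : α.sum ≤ ((ηb i : Fin n) : ℕ) := young_big hηb.1 h
            have h2 : α.sum ≤ ((ζb (ηb i) : Fin n) : ℕ) := young_big hζb.1 h1
            have h3 : α.sum ≤ ((ξb⁻¹ (ζb (ηb i)) : Fin n) : ℕ) := young_big (inv_mem hξb.1) h2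
            rw [symA_fix_big hηa h3, symA_fix_big hζa h3, symA_fix_big (symA_inv hξa) h3,
              ← Equiv.Perm.mul_apply ξb ξb⁻¹, mul_inv_cancel, Equiv.Perm.one_apply, symA_fix_big hξa h2, symA_fix_big hηa h1,
              symA_fix_big hζa h2]
        have hAζ : ξa⁻¹ * ζa * ηa ∈ symA n α β := symA_mul (symA_mul (symA_inv hξa) hζa) hηa
        have hBζ : ξb⁻¹ * ζb * ηb ∈ symB n α β := symB_mul (symB_mul (symB_inv hξb) hζb) hηb
        have eq2 : π * d * (ηa * ηb)
            = (τ₁ * τ⁻¹) * 𝔡' * ((ξa⁻¹ * ζa * ηa) * (ξb⁻¹ * ζb * ηb)) := by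
          have e1 : π * d * (ηa * ηb) = τ₁ * 𝔡 * ((ζa * ζb) * (ηa * ηb)) := by
            rw [hζeq]; group
          rw [e1, ← hX, h𝔡'eq]; group
        have hεv : ε (π * d) = (Equiv.Perm.sign ζb : ℤ) := by
          rw [hζeq]; exact hε τ₁ hτ₁ ζa hζa ζb hζb
        have hε'v : ε' (π * σ⁻¹ * d')
            = (Equiv.Perm.sign ξb : ℤ) * (Equiv.Perm.sign ζb : ℤ) * (Equiv.Perm.sign ηb : ℤ) := by
          rw [hd2, eq2, hε' (τ₁ * τ⁻¹) (rowStab_mul hτ₁ (rowStab_inv hτ)) _ hAζ _ hBζ]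
          simp [Equiv.Perm.sign_inv, Units.val_mul]
        have hsgn : ((Equiv.Perm.sign (π * σ⁻¹) : ℤˣ) : ℤ)
            = (Equiv.Perm.sign π : ℤ) * (Equiv.Perm.sign σ : ℤ) := by
          simp [Equiv.Perm.sign_inv, Units.val_mul]
        rw [hε'v, hsgn, hεv]
        ring
      · rw [if_neg hcc, if_neg (fun h => hcc (hcond.mp h)), mul_zero]
    simp only [coeffA]
    rw [Finset.mul_sum]
    exact (Fintype.sum_equiv (Equiv.mulRight σ⁻¹)
      (fun π => (Equiv.Perm.sign σ : ℤ) * (Equiv.Perm.sign ξb : ℤ) * (Equiv.Perm.sign ηb : ℤ) *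
        (if π ∈ colStab t0 ∧ π * d ∈ dCoset t0 α β 𝔡
          then (Equiv.Perm.sign π : ℤ) * ε (π * d) else 0))
      (fun ρ => if ρ ∈ colStab t0 ∧ ρ * d' ∈ dCoset t0 α β 𝔡'
          then (Equiv.Perm.sign ρ : ℤ) * ε' (ρ * d') else 0)
      (fun π => key π)).symm

end SignedYoung
end

section
/- Let $\mathrm{T}_d$ be a row semistandard $\lambda$-tableau of type $(\alpha|\beta)$ and suppose $d' \in R_{\t_0}\, d\, \mathrm{Sym}_{\alpha|\beta}$. Then either $\mathrm{T}_{d'} = \mathrm{T}_d$ or $\mathrm{T}_{d'} \rhd \mathrm{T}_d$ in the column-dominance order on tableaux of type $(\alpha|\beta)$. -/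
namespace SignedYoung
open Equiv Finset
open scoped Classical

section Aux

variable {lam : List ℕ}

private lemma cell_ext {c c' : Cell lam} (h1 : c.1 = c'.1) (h2 : (c.2 : ℕ) = (c'.2 : ℕ)) :
    c = c' := by
  obtain ⟨i, a⟩ := c; obtain ⟨i', a'⟩ := c'
  cases h1
  simp_all [Fin.ext_iff]

private lemma countP_mono {ι : Type*} (s : Multiset ι) (p q : ι → Prop) [DecidablePred p]
    [DecidablePred q]
    (h : ∀ a ∈ s, p a → q a) : s.countP p ≤ s.countP q := by
  induction s using Multiset.induction_on with
  | empty => simp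
  | cons a t ih =>
    have h2 := ih (fun b hb => h b (Multiset.mem_cons_of_mem hb))
    rw [Multiset.countP_cons, Multiset.countP_cons]
    by_cases hp : p a
    · rw [if_pos hp, if_pos (h a (Multiset.mem_cons_self a t) hp)]
      omega
    · rw [if_neg hp]
      split <;> omega

/-- If `f ≤ g` pointwise on a multiset and the image multisets are equal, then `f = g`
pointwise on the multiset. -/
private lemma map_eq_of_le {ι : Type*} (s : Multiset ι) (f g : ι → Colour)
    (hle : ∀ i ∈ s, f i ≤ g i) (heq : s.map f = s.map g) :
    ∀ i ∈ s, f i = g i := by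
  by_contra h
  push_neg at h
  obtain ⟨i0, hi0, hne⟩ := h
  have hlt : f i0 < g i0 := lt_of_le_of_ne (hle i0 hi0) hne
  have h1 : Multiset.countP (fun i => g i ≤ f i0) s < Multiset.countP (fun i => f i ≤ f i0) s := by
    obtain ⟨t, rfl⟩ := Multiset.exists_cons_of_mem hi0
    have hmono := countP_mono t (fun i => g i ≤ f i0) (fun i => f i ≤ f i0)
      (fun a ha hga => le_trans (hle a (Multiset.mem_cons_of_mem ha)) hga)
    rw [Multiset.countP_cons, Multiset.countP_cons, if_pos le_rfl, if_neg (not_le.mpr hlt)]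
    omega
  have e1 : Multiset.countP (fun x => x ≤ f i0) (s.map f)
      = Multiset.countP (fun i => f i ≤ f i0) s := by
    rw [Multiset.countP_map, Multiset.countP_eq_card_filter]
  have e2 : Multiset.countP (fun x => x ≤ f i0) (s.map g)
      = Multiset.countP (fun i => g i ≤ f i0) s := by
    rw [Multiset.countP_map, Multiset.countP_eq_card_filter]
  rw [heq, e2] at e1
  omega

/-- In a sorted list, if the entry at position `k` is `≤ v`, then at least `k+1` entries
are `≤ v`. -/
private lemma sorted_countP_ge (l : List Colour) (hs : l.Pairwise (· ≤ ·)) (k : ℕ)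
    (hk : k < l.length) (v : Colour) (hv : l[k] ≤ v) :
    k + 1 ≤ Multiset.countP (fun x => x ≤ v) (l : Multiset Colour) := by
  have hsplit : (l : Multiset Colour) = ↑(l.take (k + 1)) + ↑(l.drop (k + 1)) := by
    rw [Multiset.coe_add, List.take_append_drop]
  rw [hsplit, Multiset.countP_add]
  have hall : Multiset.countP (fun x => x ≤ v) (↑(l.take (k + 1)) : Multiset Colour)
      = (l.take (k + 1)).length := by
    rw [← Multiset.coe_card]
    rw [Multiset.countP_eq_card]
    intro a ha
    obtain ⟨i, hi, rfl⟩ := List.mem_iff_getElem.mp ha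
    have hi' : i < k + 1 := lt_of_lt_of_le hi (by simp)
    have hil : i < l.length := by
      have := hi
      simp [List.length_take] at this
      omega
    rw [List.getElem_take]
    rcases Nat.lt_or_ge i k with h | h
    · exact le_trans (List.pairwise_iff_getElem.mp hs i k hil hk h) hv
    · have : i = k := by omega
      subst this; exact hv
  rw [hall]
  have : (l.take (k + 1)).length = k + 1 := by rw [List.length_take]; omega
  omega

/-- In a sorted list, if `v` is less than the entry at position `k`, then at most `k` entries
are `≤ v`. -/
private lemma sorted_countP_le (l : List Colour) (hs : l.Pairwise (· ≤ ·)) (k : ℕ)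
    (hk : k < l.length) (v : Colour) (hv : v < l[k]) :
    Multiset.countP (fun x => x ≤ v) (l : Multiset Colour) ≤ k := by
  have hsplit : (l : Multiset Colour) = ↑(l.take k) + ↑(l.drop k) := by
    rw [Multiset.coe_add, List.take_append_drop]
  rw [hsplit, Multiset.countP_add]
  have h0 : Multiset.countP (fun x => x ≤ v) (↑(l.drop k) : Multiset Colour) = 0 := by
    rw [Multiset.countP_eq_zero]
    intro a ha
    obtain ⟨i, hi, rfl⟩ := List.mem_iff_getElem.mp ha
    rw [List.getElem_drop]
    have hkl : k + i < l.length := by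
      have := hi; simp [List.length_drop] at this; omega
    intro hle
    have : l[k] ≤ l[k + i] := by
      have hfle : (⟨k, hk⟩ : Fin l.length) ≤ ⟨k + i, hkl⟩ :=
        Fin.mk_le_mk.mpr (Nat.le_add_right k i)
      simpa using hs.rel_get_of_le hfle
    exact absurd (le_trans this hle) (not_le.mpr hv)
  rw [h0, add_zero]
  calc Multiset.countP (fun x => x ≤ v) (↑(l.take k) : Multiset Colour)
      ≤ Multiset.card (↑(l.take k) : Multiset Colour) := Multiset.countP_le_card _ _
    _ ≤ k := by rw [Multiset.coe_card]; simp

/-- **Key combinatorial lemma.** If `T` is row semistandard and `π` is a row-preserving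
permutation of the cells, then `T ∘ π = T` or `T ∘ π ⊳ T`. -/
private lemma key_lemma (T : Cell lam → Colour) (hT : RowSemistd T)
    (π : Cell lam ≃ Cell lam) (hπ : ∀ c, (π c).1 = c.1) :
    (fun c => T (π c)) = T ∨ TabGT (fun c => T (π c)) T := by
  set T' : Cell lam → Colour := fun c => T (π c) with hT'
  -- Step B: if T' = T on columns < j, then T ≤ T' pointwise on column j
  have stepB : ∀ j : ℕ, (∀ c' : Cell lam, (c'.2 : ℕ) < j → T (π c') = T c') →
      ∀ c : Cell lam, (c.2 : ℕ) = j → T c ≤ T (π c) := by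
    intro j hEq c hc
    by_contra hlt
    push_neg at hlt
    set A : Finset (Cell lam) := univ.filter (fun c' => c'.1 = c.1 ∧ T c' < T c) with hA
    set B : Finset (Cell lam) := univ.filter (fun c' => c'.1 = c.1 ∧ T (π c') < T c) with hB
    have hcardAB : A.card = B.card := by
      rw [hA, hB]
      apply Finset.card_bij (fun c' _ => π.symm c')
      · intro a ha
        simp only [Finset.mem_filter, Finset.mem_univ, true_and] at ha ⊢
        rw [π.apply_symm_apply]
        refine ⟨?_, ha.2⟩
        rw [← ha.1]
        have := hπ (π.symm a)
        rw [π.apply_symm_apply] at this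
        exact this.symm
      · intro a _ b _ hab
        exact π.symm.injective hab
      · intro b hb
        simp only [Finset.mem_filter, Finset.mem_univ, true_and] at hb
        refine ⟨π b, ?_, by simp⟩
        simp only [Finset.mem_filter, Finset.mem_univ, true_and]
        exact ⟨(hπ b).trans hb.1, hb.2⟩
    have hAB : A ⊆ B := by
      intro c' hc'
      simp only [hA, hB, Finset.mem_filter, Finset.mem_univ, true_and] at hc' ⊢
      obtain ⟨hrow, hval⟩ := hc'
      have hcol : (c'.2 : ℕ) < j := by
        by_contra hge
        push_neg at hge
        rcases Nat.eq_or_lt_of_le hge with h | h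
        · have : c' = c := cell_ext hrow (by omega)
          subst this; exact absurd hval (lt_irrefl _)
        · have : T c ≤ T c' := hT c c' hrow.symm (by omega)
          exact absurd (lt_of_le_of_lt this hval) (lt_irrefl _)
      exact ⟨hrow, by rw [hEq c' hcol]; exact hval⟩
    have hcB : c ∈ B := by
      rw [hB]
      exact Finset.mem_filter.mpr ⟨Finset.mem_univ _, rfl, hlt⟩
    have hcA : c ∉ A := by
      intro hc'
      rw [hA] at hc'
      exact absurd (Finset.mem_filter.mp hc').2.2 (lt_irrefl _)
    have : A.card < B.card := Finset.card_lt_card ⟨hAB, fun hs => hcA (hs hcB)⟩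
    omega
  -- eqUpto: if column multisets agree below j, then T' = T on columns < j
  have eqUpto : ∀ j : ℕ, (∀ j' < j, colMul T' j' = colMul T j') →
      ∀ c : Cell lam, (c.2 : ℕ) < j → T (π c) = T c := by
    intro j
    induction j using Nat.strong_induction_on with
    | _ j IH =>
      intro hcols c hcj
      set jc := (c.2 : ℕ) with hjc
      have hEq : ∀ c' : Cell lam, (c'.2 : ℕ) < jc → T (π c') = T c' :=
        IH jc hcj (fun j' hj' => hcols j' (hj'.trans hcj))
      have hle := stepB jc hEq
      have hm : (univ.filter fun c' : Cell lam => (c'.2 : ℕ) = jc).val.map T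
          = (univ.filter fun c' : Cell lam => (c'.2 : ℕ) = jc).val.map T' := by
        have := hcols jc hcj
        rw [colMul, colMul] at this
        exact this.symm
      have := map_eq_of_le (univ.filter fun c' : Cell lam => (c'.2 : ℕ) = jc).val T T'
        (fun i hi => hle i (by simpa using (Finset.mem_filter.mp hi).2)) hm c
        (by simp [Finset.mem_filter, hjc])
      exact this.symm
  by_cases hall : ∀ j, colMul T' j = colMul T j
  · left
    funext c
    exact eqUpto ((c.2 : ℕ) + 1) (fun j' _ => hall j') c (Nat.lt_succ_self _)
  · right
    push_neg at hall
    have hex : ∃ t, colMul T' t ≠ colMul T t := hall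
    set t := Nat.find hex with ht
    have hfirst : ∀ j < t, colMul T' j = colMul T j := fun j hj =>
      not_not.mp (Nat.find_min hex hj)
    refine ⟨t, hfirst, ?_⟩
    have hne : colMul T' t ≠ colMul T t := Nat.find_spec hex
    have hEq : ∀ c' : Cell lam, (c'.2 : ℕ) < t → T (π c') = T c' := eqUpto t hfirst
    have hle := stepB t hEq
    -- sorted lists
    set s : Finset (Cell lam) := univ.filter (fun c' => (c'.2 : ℕ) = t) with hs
    set y : List Colour := sortedCol (colMul T' t) with hy
    set x : List Colour := sortedCol (colMul T t) with hx
    have hyc : (y : Multiset Colour) = colMul T' t := Multiset.sort_eq _ _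
    have hxc : (x : Multiset Colour) = colMul T t := Multiset.sort_eq _ _
    have hys : y.Pairwise (· ≤ ·) := Multiset.pairwise_sort _ _
    have hxs : x.Pairwise (· ≤ ·) := Multiset.pairwise_sort _ _
    have hlen : y.length = x.length := by
      have h1 : y.length = Multiset.card (colMul T' t) := by
        rw [← hyc, Multiset.coe_card]
      have h2 : x.length = Multiset.card (colMul T t) := by
        rw [← hxc, Multiset.coe_card]
      rw [h1, h2, colMul, colMul, Multiset.card_map, Multiset.card_map]
    -- counting inequality: for every v, #{≤ v} in T' column ≤ #{≤ v} in T column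
    have hcnt : ∀ v : Colour, Multiset.countP (fun a => a ≤ v) (colMul T' t)
        ≤ Multiset.countP (fun a => a ≤ v) (colMul T t) := by
      intro v
      rw [colMul, colMul]
      have e1 : Multiset.countP (fun a => a ≤ v) ((univ.filter fun c' : Cell lam =>
          (c'.2 : ℕ) = t).val.map T') = Multiset.countP (fun i => T' i ≤ v)
          (univ.filter fun c' : Cell lam => (c'.2 : ℕ) = t).val := by
        rw [Multiset.countP_map, Multiset.countP_eq_card_filter]
      have e2 : Multiset.countP (fun a => a ≤ v) ((univ.filter fun c' : Cell lam =>
          (c'.2 : ℕ) = t).val.map T) = Multiset.countP (fun i => T i ≤ v)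
          (univ.filter fun c' : Cell lam => (c'.2 : ℕ) = t).val := by
        rw [Multiset.countP_map, Multiset.countP_eq_card_filter]
      rw [e1, e2]
      apply countP_mono
      intro a ha hva
      have hat : (a.2 : ℕ) = t := by simpa using (Finset.mem_filter.mp ha).2
      exact le_trans (hle a hat) hva
    -- find the first index where sorted lists differ
    have hexk : ∃ k, x.getD k (cCol 0) ≠ y.getD k (cCol 0) := by
      by_contra hk
      push_neg at hk
      apply hne
      rw [← hyc, ← hxc]
      congr 1
      apply List.ext_getElem hlen
      intro i hi1 hi2
      have := (hk i).symm
      rwa [List.getD_eq_getElem _ _ hi2, List.getD_eq_getElem _ _ hi1] at this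
    set k := Nat.find hexk with hk
    have hkspec : x.getD k (cCol 0) ≠ y.getD k (cCol 0) := Nat.find_spec hexk
    have hkmin : ∀ s' < k, x.getD s' (cCol 0) = y.getD s' (cCol 0) := fun s' hs' =>
      not_not.mp (Nat.find_min hexk hs')
    have hklt : k < x.length := by
      by_contra hge
      push_neg at hge
      apply hkspec
      rw [List.getD_eq_default _ _ hge, List.getD_eq_default _ _ (hlen ▸ hge)]
    have hklty : k < y.length := hlen ▸ hklt
    refine ⟨k, fun s' hs' => (hkmin s' hs').symm, ?_⟩
    rw [List.getD_eq_getElem _ _ hklt, List.getD_eq_getElem _ _ hklty]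
    rcases lt_trichotomy x[k] y[k] with h | h | h
    · exact h
    · exact absurd (by rw [List.getD_eq_getElem _ _ hklt, List.getD_eq_getElem _ _ hklty,
        h]) hkspec
    · exfalso
      -- y[k] < x[k] contradicts the counting inequality with v = y[k]
      set v := y[k] with hv
      have c1 : k + 1 ≤ Multiset.countP (fun a => a ≤ v) (colMul T' t) := by
        rw [← hyc]
        exact sorted_countP_ge y hys k hklty v le_rfl
      have c2 : Multiset.countP (fun a => a ≤ v) (colMul T t) ≤ k := by
        rw [← hxc]
        exact sorted_countP_le x hxs k hklt v h
      have := hcnt v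
      omega

end Aux

/-- **Row semistandard and double cosets (Lemma 4.2(ii)).** If `T_d` is row semistandard
and `d' ∈ R_{t0} d Sym_{α|β}`, then either `T_{d'} = T_d` or `T_{d'} ⊳ T_d`. -/
theorem row_semistandard_dominance (n : ℕ) (lam : List ℕ) (hl : IsPartition n lam)
    (α β : List ℕ) (hab : IsBicomp n α β) (t0 : Tab n lam) (d d' : Sym n)
    (hrss : RowSemistd (TOf t0 α β d)) (hd' : d' ∈ dCoset t0 α β d) :
    TOf t0 α β d' = TOf t0 α β d ∨ TabGT (TOf t0 α β d') (TOf t0 α β d) := by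
  obtain ⟨τ, hτ, ξ, hξ, rfl⟩ := hd'
  set π : Cell lam ≃ Cell lam := t0.trans (((τ⁻¹ : Sym n) : Fin n ≃ Fin n).trans t0.symm)
    with hπdef
  have hπapp : ∀ c : Cell lam, π c = t0.symm (τ⁻¹ (t0 c)) := fun c => rfl
  have hπ : ∀ c : Cell lam, (π c).1 = c.1 := by
    intro c
    have h := hτ (τ⁻¹ (t0 c))
    rw [← Equiv.Perm.mul_apply, mul_inv_cancel, Equiv.Perm.one_apply] at h
    rw [hπapp, ← h, Equiv.symm_apply_apply]
  have hb : ∀ i : Fin n, blockOf (α ++ β) ((ξ⁻¹ : Sym n) i) = blockOf (α ++ β) i :=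
    (youngSubgroup n (α ++ β)).inv_mem hξ
  have hTd' : TOf t0 α β (τ * d * ξ) = fun c => TOf t0 α β d (π c) := by
    funext c
    show canonT t0 α β (t0.symm ((τ * d * ξ)⁻¹ (t0 c)))
      = canonT t0 α β (t0.symm (d⁻¹ (t0 (π c))))
    rw [hπapp, Equiv.apply_symm_apply]
    have happ : (τ * d * ξ)⁻¹ (t0 c) = ξ⁻¹ (d⁻¹ (τ⁻¹ (t0 c))) := by
      simp [mul_inv_rev, Equiv.Perm.mul_apply]
    rw [happ]
    show colourOfIdx α β (t0 (t0.symm (ξ⁻¹ (d⁻¹ (τ⁻¹ (t0 c))))))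
      = colourOfIdx α β (t0 (t0.symm (d⁻¹ (τ⁻¹ (t0 c)))))
    rw [Equiv.apply_symm_apply, Equiv.apply_symm_apply]
    unfold colourOfIdx
    rw [hb]
  rw [hTd']
  exact key_lemma (TOf t0 α β d) hrss π hπ

end SignedYoung
end
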